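/- Let $u$ solve $u' = 2e^{u/m}(u-m)$, $u(0)=R_0^2 > m$, on $[0,\delta)$. Then for all $t \in [0,\delta)$, $0 < e^{-u(t)/m} \leq e^{-R_0^2/m} - \frac{2(R_0^2-m)}{m}t$; in particular $\delta \leq \frac{m}{2(R_0^2-m)}e^{-R_0^2/m}$ and $u(t) \geq -m\log\big(e^{-R_0^2/m} - \frac{2(R_0^2-m)}{m}t\big)$. -/

import Mathlib

open Real Set

/-- Explicit upper barrier for `e^{-u/m}` along the flow `u' = 2 e^{u/m}(u-m)`
when `u(0) = R₀² > m`; in particular the existence time is at most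
`T₂ = m e^{-R₀²/m} / (2(R₀² - m))`. -/
theorem exp_barrier_above (m R0sq δ : ℝ) (hm : 0 < m) (hR0 : m < R0sq)
    (u : ℝ → ℝ) (hu0 : u 0 = R0sq) (hrange : ∀ t ∈ Ico (0 : ℝ) δ, m < u t)
    (hode : ∀ t ∈ Ico (0 : ℝ) δ, HasDerivAt u (2 * exp (u t / m) * (u t - m)) t) :
    (∀ t ∈ Ico (0 : ℝ) δ,
      0 < exp (-u t / m) ∧
      exp (-u t / m) ≤ exp (-R0sq / m) - 2 * (R0sq - m) / m * t ∧
      u t ≥ -m * Real.log (exp (-R0sq / m) - 2 * (R0sq - m) / m * t)) ∧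
    δ ≤ m / (2 * (R0sq - m)) * exp (-R0sq / m) := by
  have hm' : m ≠ 0 := ne_of_gt hm
  have hc : 0 < 2 * (R0sq - m) / m := by apply div_pos (by linarith) hm
  have key : ∀ t ∈ Ico (0:ℝ) δ,
      exp (-u t / m) ≤ exp (-R0sq / m) - 2 * (R0sq - m) / m * t := by
    intro t₀ ht₀
    obtain ⟨ht0, htδ⟩ := ht₀
    have hsub : Icc (0:ℝ) t₀ ⊆ Ico 0 δ := fun s hs => ⟨hs.1, lt_of_le_of_lt hs.2 htδ⟩
    have hcont : ContinuousOn u (Icc 0 t₀) := fun s hs =>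
      ((hode s (hsub hs)).continuousAt).continuousWithinAt
    have hmono : MonotoneOn u (Icc 0 t₀) := by
      apply monotoneOn_of_deriv_nonneg (convex_Icc 0 t₀) hcont
      · intro x hx
        rw [interior_Icc] at hx
        exact ((hode x (hsub ⟨hx.1.le, hx.2.le⟩)).differentiableAt).differentiableWithinAt
      · intro x hx
        rw [interior_Icc] at hx
        have hx' : x ∈ Ico (0:ℝ) δ := hsub ⟨hx.1.le, hx.2.le⟩
        rw [(hode x hx').deriv]
        have := hrange x hx'
        have h1 : (0:ℝ) ≤ u x - m := by linarith
        positivity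
    have hge : ∀ x ∈ Icc (0:ℝ) t₀, R0sq ≤ u x := by
      intro x hx
      have := hmono (left_mem_Icc.mpr ht0) hx hx.1
      rwa [hu0] at this
    -- barrier function h s = exp(-u s/m) + c * s is antitone on [0, t₀]
    have hder : ∀ x ∈ Ico (0:ℝ) δ, HasDerivAt (fun s => exp (-u s / m) + 2 * (R0sq - m) / m * s)
        (-(2 * (u x - m) / m) + 2 * (R0sq - m) / m) x := by
      intro x hx
      have h1 : HasDerivAt (fun s => -u s / m) (-(2 * exp (u x / m) * (u x - m)) / m) x :=
        ((hode x hx).neg).div_const m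
      have h2 := h1.exp
      have h3 : HasDerivAt (fun s : ℝ => 2 * (R0sq - m) / m * s) (2 * (R0sq - m) / m) x := by
        simpa using (hasDerivAt_id x).const_mul (2 * (R0sq - m) / m)
      have h4 := h2.add h3
      refine h4.congr_deriv (Eq.symm ?_)
      rw [neg_div, Real.exp_neg]
      field_simp
    have hanti : AntitoneOn (fun s => exp (-u s / m) + 2 * (R0sq - m) / m * s) (Icc 0 t₀) := by
      apply antitoneOn_of_deriv_nonpos (convex_Icc 0 t₀)
      · intro s hs
        exact ((hder s (hsub hs)).continuousAt).continuousWithinAt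
      · intro x hx
        rw [interior_Icc] at hx
        exact ((hder x (hsub ⟨hx.1.le, hx.2.le⟩)).differentiableAt).differentiableWithinAt
      · intro x hx
        rw [interior_Icc] at hx
        have hx' : x ∈ Icc (0:ℝ) t₀ := ⟨hx.1.le, hx.2.le⟩
        rw [(hder x (hsub hx')).deriv]
        have hgx := hge x hx'
        have : 2 * (R0sq - m) / m ≤ 2 * (u x - m) / m := by
          gcongr <;> linarith
        linarith
    have := hanti (left_mem_Icc.mpr ht0) (right_mem_Icc.mpr ht0) ht0
    simp only [hu0, mul_zero, add_zero] at this
    linarith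
  constructor
  · intro t ht
    have hle := key t ht
    have hpos := Real.exp_pos (-u t / m)
    refine ⟨hpos, hle, ?_⟩
    have hlog := Real.log_le_log hpos hle
    rw [Real.log_exp] at hlog
    have : -u t ≤ Real.log (exp (-R0sq / m) - 2 * (R0sq - m) / m * t) * m :=
      (div_le_iff₀ hm).mp hlog
    rw [ge_iff_le]
    nlinarith
  · apply le_of_forall_lt
    intro t htδ
    have hT : 0 < m / (2 * (R0sq - m)) * exp (-R0sq / m) := by
      have : 0 < m / (2 * (R0sq - m)) := div_pos hm (by linarith)
      positivity
    rcases lt_or_ge t 0 with h | h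
    · linarith
    · have hle := key t ⟨h, htδ⟩
      have hpos := Real.exp_pos (-u t / m)
      have h1 : 2 * (R0sq - m) / m * t < exp (-R0sq / m) := by linarith
      have h2 : t < exp (-R0sq / m) / (2 * (R0sq - m) / m) := by
        rw [lt_div_iff₀ hc]; linarith [mul_comm t (2 * (R0sq - m) / m)]
      have h3 : exp (-R0sq / m) / (2 * (R0sq - m) / m)
          = m / (2 * (R0sq - m)) * exp (-R0sq / m) := by
        field_simp
      linarith
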